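/- Let ρ be a d×d density matrix and let U₁,…,U_N (N ≥ 2) be d×d unitary matrices. Then ∑_{s=1}^{N} I_ρ(U_s) ≥ (1/(2N−2)) { ∑_{1≤s<t≤N} I_ρ(U_s − U_t) + (2/(N(N−1))) [ ∑_{1≤s<t≤N} √( I_ρ(U_s + U_t) ) ]² }. -/

import Mathlib

open Matrix Finset
open scoped ComplexOrder

/-- The positive semidefinite square root of a positive semidefinite matrix
(the definition `Matrix.PosSemidef.sqrt` of the older Mathlib, since removed). -/
noncomputable def Matrix.PosSemidef.sqrt {n : Type*} [Fintype n] [DecidableEq n] {A : Matrix n n ℂ}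
    (hA : A.PosSemidef) : Matrix n n ℂ :=
  hA.1.eigenvectorUnitary.1 * diagonal ((↑) ∘ (√·) ∘ hA.1.eigenvalues) *
    (star hA.1.eigenvectorUnitary : Matrix n n ℂ)

/-- Wigner–Yanase skew information `I_ρ(A) = (1/2) Tr([√ρ, A]† [√ρ, A])` of a matrix `A`
with respect to a positive semidefinite matrix `ρ`, where `√ρ = hρ.sqrt` is the positive
semidefinite square root of `ρ`. -/
noncomputable def skewInfo {d : ℕ} {ρ : Matrix (Fin d) (Fin d) ℂ} (hρ : ρ.PosSemidef)
    (A : Matrix (Fin d) (Fin d) ℂ) : ℝ :=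
  (1 / 2 : ℝ) *
    (((hρ.sqrt * A - A * hρ.sqrt)ᴴ * (hρ.sqrt * A - A * hρ.sqrt)).trace).re

lemma trace_conj_re_nonneg {d : ℕ} (B : Matrix (Fin d) (Fin d) ℂ) :
    0 ≤ ((Bᴴ * B).trace).re := by
  have h : ((Bᴴ * B).trace).re = ∑ i, ∑ j, Complex.normSq (B j i) := by
    simp [Matrix.trace, Matrix.diag, Matrix.mul_apply, Matrix.conjTranspose_apply,
      Complex.re_sum, Complex.normSq_apply, Complex.mul_re]
  rw [h]
  exact Finset.sum_nonneg fun i _ => Finset.sum_nonneg fun j _ => Complex.normSq_nonneg _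

lemma skewInfo_nonneg {d : ℕ} {ρ : Matrix (Fin d) (Fin d) ℂ} (hρ : ρ.PosSemidef)
    (A : Matrix (Fin d) (Fin d) ℂ) : 0 ≤ skewInfo hρ A := by
  unfold skewInfo
  have := trace_conj_re_nonneg (hρ.sqrt * A - A * hρ.sqrt)
  linarith

lemma skewInfo_parallelogram {d : ℕ} {ρ : Matrix (Fin d) (Fin d) ℂ} (hρ : ρ.PosSemidef)
    (A B : Matrix (Fin d) (Fin d) ℂ) :
    skewInfo hρ (A - B) + skewInfo hρ (A + B) =
      2 * skewInfo hρ A + 2 * skewInfo hρ B := by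
  set C := hρ.sqrt with hC
  set X := C * A - A * C with hX
  set Y := C * B - B * C with hY
  have e1 : C * (A - B) - (A - B) * C = X - Y := by
    simp [hX, hY, Matrix.mul_sub, Matrix.sub_mul]; abel
  have e2 : C * (A + B) - (A + B) * C = X + Y := by
    simp [hX, hY, Matrix.mul_add, Matrix.add_mul]; abel
  have key : ((X - Y)ᴴ * (X - Y)).trace + ((X + Y)ᴴ * (X + Y)).trace
      = 2 * (Xᴴ * X).trace + 2 * (Yᴴ * Y).trace := by
    simp only [conjTranspose_sub, conjTranspose_add, Matrix.sub_mul, Matrix.mul_sub,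
      Matrix.add_mul, Matrix.mul_add, trace_add, trace_sub]
    ring
  have key' := congrArg Complex.re key
  simp only [Complex.add_re, Complex.mul_re, Complex.re_ofNat, Complex.im_ofNat] at key'
  unfold skewInfo
  rw [e1, e2]
  linarith

lemma sum_Ioi_swap {M : Type*} [AddCommMonoid M] {N : ℕ} (f : Fin N → Fin N → M) :
    ∑ s : Fin N, ∑ t ∈ Ioi s, f s t = ∑ t : Fin N, ∑ s ∈ Iio t, f s t := by
  rw [Finset.sum_sigma' univ (fun s => Ioi s) (fun s t => f s t),
      Finset.sum_sigma' univ (fun t => Iio t) (fun t s => f s t)]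
  refine Finset.sum_nbij' (fun x => ⟨x.2, x.1⟩) (fun x => ⟨x.2, x.1⟩) ?_ ?_ (fun _ _ => rfl)
      (fun _ _ => rfl) (fun _ _ => rfl) <;>
    simp only [Finset.mem_sigma, Finset.mem_Ioi, Finset.mem_Iio, Sigma.forall, mem_univ,
      true_and, and_true] <;>
    exact fun a b h => h

lemma pair_count {N : ℕ} (hN : 1 ≤ N) (g : Fin N → ℝ) :
    ∑ s : Fin N, ∑ t ∈ Ioi s, (g s + g t) = ((N : ℝ) - 1) * ∑ s, g s := by
  have h1 : ∑ s : Fin N, ∑ t ∈ Ioi s, (g s + g t)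
      = ∑ s : Fin N, ((Ioi s).card • g s) + ∑ s : Fin N, ∑ t ∈ Ioi s, g t := by
    rw [← Finset.sum_add_distrib]
    refine Finset.sum_congr rfl fun s _ => ?_
    rw [Finset.sum_add_distrib, Finset.sum_const]
  have h2 : ∑ s : Fin N, ∑ t ∈ Ioi s, g t = ∑ t : Fin N, ((Iio t).card • g t) := by
    rw [sum_Ioi_swap (fun s t => g t)]
    exact Finset.sum_congr rfl fun t _ => by rw [Finset.sum_const]
  rw [h1, h2, ← Finset.sum_add_distrib, Finset.mul_sum]
  refine Finset.sum_congr rfl fun s _ => ?_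
  rw [Fin.card_Ioi, Fin.card_Iio, nsmul_eq_mul, nsmul_eq_mul, ← add_mul, ← Nat.cast_add]
  have : N - 1 - (s : ℕ) + (s : ℕ) = N - 1 := by omega
  rw [this, Nat.cast_sub hN, Nat.cast_one]

lemma pairs_card {N : ℕ} :
    ((univ : Finset (Fin N)).sigma (fun s => Ioi s)).card * 2 = N * (N - 1) := by
  rw [Finset.card_sigma]
  have : ∑ s : Fin N, (Ioi s).card = ∑ s : Fin N, (N - 1 - (s : ℕ)) :=
    Finset.sum_congr rfl fun s _ => Fin.card_Ioi s
  rw [this, Fin.sum_univ_eq_sum_range (fun i => N - 1 - i),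
    Finset.sum_range_reflect (fun i => i) N]
  exact Finset.sum_range_id_mul_two N

theorem stmt_7 {d N : ℕ} (hN : 2 ≤ N)
    (ρ : Matrix (Fin d) (Fin d) ℂ) (hρ : ρ.PosSemidef) (htr : ρ.trace = 1)
    (U : Fin N → Matrix (Fin d) (Fin d) ℂ)
    (hU : ∀ s, U s ∈ Matrix.unitaryGroup (Fin d) ℂ) :
    ∑ s, skewInfo hρ (U s) ≥
      (1 / (2 * (N : ℝ) - 2)) *
        ((∑ s : Fin N, ∑ t ∈ Finset.Ioi s, skewInfo hρ (U s - U t))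
          + (2 / ((N : ℝ) * ((N : ℝ) - 1))) *
            (∑ s : Fin N, ∑ t ∈ Finset.Ioi s,
              Real.sqrt (skewInfo hρ (U s + U t))) ^ 2) := by
  have hN1 : 1 ≤ N := le_trans (by norm_num) hN
  have hNR : (2 : ℝ) ≤ (N : ℝ) := by exact_mod_cast hN
  set T := ∑ s, skewInfo hρ (U s) with hT
  set D := ∑ s : Fin N, ∑ t ∈ Finset.Ioi s, skewInfo hρ (U s - U t) with hD
  set P := ∑ s : Fin N, ∑ t ∈ Finset.Ioi s, skewInfo hρ (U s + U t) with hP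
  set S := ∑ s : Fin N, ∑ t ∈ Finset.Ioi s, Real.sqrt (skewInfo hρ (U s + U t)) with hS
  -- Step A: D + P = (2N - 2) * T
  have hDP : D + P = (2 * (N : ℝ) - 2) * T := by
    have e : D + P = ∑ s : Fin N, ∑ t ∈ Finset.Ioi s,
        ((2 * skewInfo hρ (U s)) + (2 * skewInfo hρ (U t))) := by
      rw [hD, hP, ← Finset.sum_add_distrib]
      refine Finset.sum_congr rfl fun s _ => ?_
      rw [← Finset.sum_add_distrib]
      exact Finset.sum_congr rfl fun t _ => skewInfo_parallelogram hρ (U s) (U t)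
    rw [e, pair_count hN1 (fun s => 2 * skewInfo hρ (U s)), ← Finset.mul_sum, ← hT]
    ring
  -- Step B: Cauchy–Schwarz
  have hCS : S ^ 2 ≤ ((N : ℝ) * ((N : ℝ) - 1) / 2) * P := by
    have hSsig : S = ∑ x ∈ (univ : Finset (Fin N)).sigma (fun s => Ioi s),
        Real.sqrt (skewInfo hρ (U x.1 + U x.2)) := by
      rw [hS, Finset.sum_sigma' univ (fun s => Ioi s)
        (fun s t => Real.sqrt (skewInfo hρ (U s + U t)))]
    have hPsig : P = ∑ x ∈ (univ : Finset (Fin N)).sigma (fun s => Ioi s),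
        skewInfo hρ (U x.1 + U x.2) := by
      rw [hP, Finset.sum_sigma' univ (fun s => Ioi s)
        (fun s t => skewInfo hρ (U s + U t))]
    have hcard : (((univ : Finset (Fin N)).sigma (fun s => Ioi s)).card : ℝ)
        = (N : ℝ) * ((N : ℝ) - 1) / 2 := by
      have h2 := congrArg (Nat.cast : ℕ → ℝ) (pairs_card (N := N))
      push_cast [Nat.cast_sub hN1] at h2
      linarith
    have := sq_sum_le_card_mul_sum_sq
      (s := (univ : Finset (Fin N)).sigma (fun s => Ioi s))
      (f := fun x => Real.sqrt (skewInfo hρ (U x.1 + U x.2)))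
    rw [hSsig, hPsig]
    calc (∑ x ∈ (univ : Finset (Fin N)).sigma (fun s => Ioi s),
            Real.sqrt (skewInfo hρ (U x.1 + U x.2))) ^ 2
        ≤ (((univ : Finset (Fin N)).sigma (fun s => Ioi s)).card : ℝ) *
            ∑ x ∈ (univ : Finset (Fin N)).sigma (fun s => Ioi s),
              Real.sqrt (skewInfo hρ (U x.1 + U x.2)) ^ 2 := this
      _ = ((N : ℝ) * ((N : ℝ) - 1) / 2) *
            ∑ x ∈ (univ : Finset (Fin N)).sigma (fun s => Ioi s),
              skewInfo hρ (U x.1 + U x.2) := by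
          rw [hcard]
          congr 1
          exact Finset.sum_congr rfl fun x _ => Real.sq_sqrt (skewInfo_nonneg hρ _)
  -- Final arithmetic
  have hc : (0 : ℝ) < 2 * (N : ℝ) - 2 := by linarith
  have hp : (0 : ℝ) < (N : ℝ) * ((N : ℝ) - 1) := by nlinarith
  have hkey : (2 / ((N : ℝ) * ((N : ℝ) - 1))) * S ^ 2 ≤ P := by
    rw [div_mul_eq_mul_div, div_le_iff₀ hp]
    nlinarith
  have : (1 / (2 * (N : ℝ) - 2)) * (D + (2 / ((N : ℝ) * ((N : ℝ) - 1))) * S ^ 2)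
      ≤ (1 / (2 * (N : ℝ) - 2)) * (D + P) :=
    mul_le_mul_of_nonneg_left (by linarith) (by positivity)
  have hfin : (1 / (2 * (N : ℝ) - 2)) * (D + P) = T := by
    rw [hDP]; field_simp
    exact mul_div_cancel_left₀ T (by intro h; linarith)
  linarith [this, hfin.le, hfin.ge]
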